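/- Let F be a nonempty closed set of d × d density matrices, let ρ be a d × d density matrix such that the generalized robustness R_F(ρ) is finite, and let s ≥ R_F(ρ) with s > 0. Then there exists σ ∈ F such that S_{m,ρ,s}(σ) ≥ 0 for every m ∈ {1, …, d}. -/

import Mathlib

open scoped ComplexOrder ENNReal

/-- A density matrix: positive semidefinite (hence Hermitian) with trace 1. -/
def IsDensityMatrix {d : ℕ} (A : Matrix (Fin d) (Fin d) ℂ) : Prop :=
  A.PosSemidef ∧ A.trace = 1

/-- The generalized robustness `R_F(ρ)`, valued in the extended nonnegative reals:
the infimum of `s ≥ 0` such that `(ρ + sτ)/(1 + s) ∈ F` for some density matrix `τ`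
(`+∞` if no such `s` exists). -/
noncomputable def Robustness {d : ℕ} (F : Set (Matrix (Fin d) (Fin d) ℂ))
    (ρ : Matrix (Fin d) (Fin d) ℂ) : ℝ≥0∞ :=
  ⨅ s ∈ {s : ℝ | 0 ≤ s ∧ ∃ τ, IsDensityMatrix τ ∧
      ((1 : ℂ) + (s : ℂ))⁻¹ • (ρ + (s : ℂ) • τ) ∈ F}, ENNReal.ofReal s

/-- `Spoly A m` is the recursively defined quantity `S_m(A)`. -/
noncomputable def Spoly {d : ℕ} (A : Matrix (Fin d) (Fin d) ℂ) : ℕ → ℂ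
  | 0 => 1
  | m + 1 => ((m : ℂ) + 1)⁻¹ *
      ∑ l ∈ Finset.range (m + 1), (-1 : ℂ) ^ l * (A ^ (l + 1)).trace * Spoly A (m - l)

section Helpers
open Matrix Finset

lemma unitConjPow {d : ℕ} {B U D : Matrix (Fin d) (Fin d) ℂ} (hB : B = U * D * star U)
    (hU1 : U * star U = 1) (hU2 : star U * U = 1) (m : ℕ) : B ^ m = U * D ^ m * star U := by
  induction m with
  | zero => simp [hU1]
  | succ m ih =>
      rw [pow_succ, ih, hB, pow_succ]
      simp only [Matrix.mul_assoc]
      rw [← Matrix.mul_assoc (star U) U, hU2, Matrix.one_mul]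

lemma trace_pow_eig {d : ℕ} {A : Matrix (Fin d) (Fin d) ℂ} (hA : A.IsHermitian) (l : ℕ) :
    (A ^ l).trace = ∑ i, ((hA.eigenvalues i : ℂ)) ^ l := by
  have hU1 : (hA.eigenvectorUnitary : Matrix (Fin d) (Fin d) ℂ) * star (hA.eigenvectorUnitary : Matrix (Fin d) (Fin d) ℂ) = 1 :=
    (Matrix.mem_unitaryGroup_iff).mp hA.eigenvectorUnitary.2
  have hU2 : star (hA.eigenvectorUnitary : Matrix (Fin d) (Fin d) ℂ) * (hA.eigenvectorUnitary : Matrix (Fin d) (Fin d) ℂ) = 1 :=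
    (Matrix.mem_unitaryGroup_iff').mp hA.eigenvectorUnitary.2
  rw [unitConjPow (hA.spectral_theorem.trans (Unitary.conjStarAlgAut_apply _ _)) hU1 hU2 l, trace_mul_cycle, hU2,
    Matrix.one_mul, diagonal_pow, trace_diagonal]
  simp

noncomputable def Esym {d : ℕ} (lam : Fin d → ℝ) (k : ℕ) : ℝ :=
  MvPolynomial.eval lam (MvPolynomial.esymm (Fin d) ℝ k)

lemma Esym_nonneg {d : ℕ} {lam : Fin d → ℝ} (h : ∀ i, 0 ≤ lam i) (k : ℕ) : 0 ≤ Esym lam k := by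
  rw [Esym, MvPolynomial.esymm, map_sum]
  refine Finset.sum_nonneg fun t _ => ?_
  rw [map_prod]
  exact Finset.prod_nonneg fun i _ => by simpa using h i

lemma Esym_newton {d : ℕ} (lam : Fin d → ℝ) (k : ℕ) :
    (k : ℝ) * Esym lam k = (-1) ^ (k + 1) *
      ∑ a ∈ Finset.HasAntidiagonal.antidiagonal k with a.1 < k,
        (-1 : ℝ) ^ a.1 * Esym lam a.1 * (∑ i, lam i ^ a.2) := by
  have := congrArg (MvPolynomial.eval lam) (MvPolynomial.mul_esymm_eq_sum (Fin d) ℝ k)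
  simpa [Esym, MvPolynomial.psum, map_sum, _root_.map_mul, map_pow] using this

lemma Esym_newton' {d : ℕ} (lam : Fin d → ℝ) (m : ℕ) :
    ((m : ℝ) + 1) * Esym lam (m + 1) =
      ∑ l ∈ Finset.range (m + 1), (-1 : ℝ) ^ l * (∑ i, lam i ^ (l + 1)) * Esym lam (m - l) := by
  have h := Esym_newton lam (m + 1)
  rw [Finset.sum_filter, Finset.Nat.sum_antidiagonal_eq_sum_range_succ_mk] at h
  rw [Finset.sum_range_succ] at h
  simp only [Nat.lt_succ_iff] at h
  have h2 : ∀ x ∈ Finset.range (m + 1),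
      (if x ≤ m then (-1 : ℝ) ^ x * Esym lam x * ∑ i, lam i ^ (m + 1 - x) else 0)
      = (-1 : ℝ) ^ x * Esym lam x * ∑ i, lam i ^ (m + 1 - x) := by
    intro x hx
    rw [if_pos (Nat.lt_succ_iff.mp (Finset.mem_range.mp hx))]
  rw [Finset.sum_congr rfl h2] at h
  rw [if_neg (by omega), add_zero, Finset.mul_sum] at h
  push_cast at h
  rw [h, ← Finset.sum_range_reflect]
  refine Finset.sum_congr rfl fun x hx => ?_
  have hx' : x ≤ m := Nat.lt_succ_iff.mp (Finset.mem_range.mp hx)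
  have h0 : m + 1 - 1 - x = m - x := by omega
  have h1 : m + 1 - (m - x) = x + 1 := by omega
  have h2 : (-1:ℝ)^(m+1+1) * (-1)^(m-x) = (-1)^x := by
    rw [← pow_add]
    have h3 : m+1+1+(m-x) = x + 2*(m+1-x) := by omega
    rw [h3, pow_add, pow_mul]
    simp
  rw [h0, h1, ← mul_assoc, ← mul_assoc, h2]
  ring


lemma Spoly_eq_esym {d : ℕ} {A : Matrix (Fin d) (Fin d) ℂ} (hA : A.IsHermitian)
    (htr : ∀ l : ℕ, (A ^ l).trace = ∑ i, ((hA.eigenvalues i : ℂ)) ^ l) :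
    ∀ m, Spoly A m = ((Esym hA.eigenvalues m : ℝ) : ℂ) := by
  intro m
  induction m using Nat.strong_induction_on with
  | _ m ih =>
    match m with
    | 0 => simp [Spoly, Esym, MvPolynomial.esymm_zero]
    | Nat.succ m =>
      have hsum : ∑ l ∈ Finset.range (m + 1), (-1 : ℂ) ^ l * (A ^ (l + 1)).trace * Spoly A (m - l)
          = (((∑ l ∈ Finset.range (m + 1), (-1 : ℝ) ^ l * (∑ i, hA.eigenvalues i ^ (l + 1)) *
              Esym hA.eigenvalues (m - l)) : ℝ) : ℂ) := by
        push_cast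
        refine Finset.sum_congr rfl fun l hl => ?_
        rw [htr (l + 1), ih (m - l) (by omega)]
      simp only [Spoly]
      rw [hsum, ← Esym_newton' hA.eigenvalues m]
      push_cast
      have hm : ((m:ℂ) + 1) ≠ 0 := Nat.cast_add_one_ne_zero m
      rw [← mul_assoc, inv_mul_cancel₀ hm, one_mul]

lemma density_entry_bound {d : ℕ} {σ : Matrix (Fin d) (Fin d) ℂ} (h : IsDensityMatrix σ)
    (i j : Fin d) : ‖σ i j‖ ≤ 1 := by
  have hH : σ.IsHermitian := h.1.1
  set U : Matrix (Fin d) (Fin d) ℂ := (hH.eigenvectorUnitary : Matrix (Fin d) (Fin d) ℂ) with hU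
  have hU2 : star U * U = 1 := (Matrix.mem_unitaryGroup_iff').mp hH.eigenvectorUnitary.2
  set lam := hH.eigenvalues with hlam
  have hlam0 : ∀ k, 0 ≤ lam k := fun k => h.1.eigenvalues_nonneg k
  have hsum : ∑ k, lam k = 1 := by
    have h1 := trace_pow_eig hH 1
    rw [pow_one, h.2] at h1
    have h2 : ((1:ℂ)) = ((∑ k, lam k : ℝ) : ℂ) := by push_cast; simpa using h1
    exact_mod_cast h2.symm
  have hUbd : ∀ a k, ‖U a k‖ ≤ 1 := by
    intro a k
    have h1 : (star U * U) k k = 1 := by rw [hU2]; simp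
    have h2 : ((∑ x, ‖U x k‖^2 : ℝ) : ℂ) = 1 := by
      rw [← h1]
      simp [Matrix.mul_apply, Matrix.conjTranspose_apply, Complex.conj_mul']
    have h3 : ∑ x, ‖U x k‖^2 = 1 := by exact_mod_cast h2
    have h4 : ‖U a k‖^2 ≤ 1 := by
      rw [← h3]
      exact Finset.single_le_sum (fun x _ => sq_nonneg ‖U x k‖) (Finset.mem_univ a)
    nlinarith [norm_nonneg (U a k)]
  have hentry : σ i j = ∑ k, U i k * (lam k : ℂ) * (starRingEnd ℂ) (U j k) := by
    conv_lhs => rw [hH.spectral_theorem, Unitary.conjStarAlgAut_apply]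
    rw [Matrix.mul_apply]
    refine Finset.sum_congr rfl fun k _ => ?_
    rw [Matrix.mul_diagonal]
    simp only [Matrix.star_apply, Function.comp_apply, Complex.star_def]
    norm_cast
  rw [hentry]
  calc ‖∑ k, U i k * (lam k : ℂ) * (starRingEnd ℂ) (U j k)‖
      ≤ ∑ k, ‖U i k * (lam k : ℂ) * (starRingEnd ℂ) (U j k)‖ :=
        norm_sum_le _ _
    _ ≤ ∑ k, lam k := by
        refine Finset.sum_le_sum fun k _ => ?_
        rw [norm_mul, norm_mul, Complex.norm_conj, Complex.norm_of_nonneg (hlam0 k)]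
        have h5 := hUbd i k
        have h6 := hUbd j k
        have h7 := norm_nonneg (U i k)
        have h8 := norm_nonneg (U j k)
        have h9 : ‖U i k‖ * ‖U j k‖ ≤ 1 :=
          mul_le_one₀ h5 h8 h6
        nlinarith [hlam0 k, h9]
    _ = 1 := hsum

lemma posSemidef_real_smul {d : ℕ} {M : Matrix (Fin d) (Fin d) ℂ} (hM : M.PosSemidef)
    {r : ℝ} (hr : 0 ≤ r) : (((r:ℂ)) • M).PosSemidef := by
  refine Matrix.PosSemidef.of_dotProduct_mulVec_nonneg ?_ ?_
  · have : star ((r:ℂ)) = (r:ℂ) := by simp [Complex.ext_iff]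
    unfold Matrix.IsHermitian
    rw [Matrix.conjTranspose_smul, this, hM.1]
  · intro x
    rw [Matrix.smul_mulVec, dotProduct_smul]
    have h0 : (0:ℂ) ≤ (r:ℂ) := by exact_mod_cast hr
    simpa using mul_nonneg h0 (hM.dotProduct_mulVec_nonneg x)

lemma Spoly_nonneg {d : ℕ} {A : Matrix (Fin d) (Fin d) ℂ} (hA : A.PosSemidef) (m : ℕ) :
    0 ≤ Spoly A m := by
  rw [Spoly_eq_esym hA.1 (trace_pow_eig hA.1) m]
  have := Esym_nonneg (fun i => hA.eigenvalues_nonneg i) m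
  exact_mod_cast this

end Helpers

/-- `Sres ρ s m η = S_{m,ρ,s}(η) = S_m(((1+s)η − ρ)/s)`. -/
noncomputable def Sres {d : ℕ} (ρ : Matrix (Fin d) (Fin d) ℂ) (s : ℝ) (m : ℕ)
    (η : Matrix (Fin d) (Fin d) ℂ) : ℂ :=
  Spoly ((s : ℂ)⁻¹ • (((1 : ℂ) + (s : ℂ)) • η - ρ)) m

/-- If `F` is nonempty and closed, `R_F(ρ)` is finite, and `s ≥ R_F(ρ)` with `s > 0`,
then there exists `σ ∈ F` with `S_{m,ρ,s}(σ) ≥ 0` for every `m ∈ {1, …, d}`. -/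
theorem exists_Sres_nonneg_of_robustness_le {d : ℕ}
    (F : Set (Matrix (Fin d) (Fin d) ℂ)) (hFne : F.Nonempty) (hFc : IsClosed F)
    (hF : ∀ σ ∈ F, IsDensityMatrix σ)
    (ρ : Matrix (Fin d) (Fin d) ℂ) (hρ : IsDensityMatrix ρ)
    (hfin : Robustness F ρ ≠ ⊤)
    (s : ℝ) (hs : 0 < s) (hsR : Robustness F ρ ≤ ENNReal.ofReal s) :
    ∃ σ ∈ F, ∀ m ∈ Finset.Icc 1 d, 0 ≤ Sres ρ s m σ := by
  classical
  -- Step 1: a sequence of approximate witnesses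
  have hseq : ∀ n : ℕ, ∃ p : ℝ × Matrix (Fin d) (Fin d) ℂ, 0 ≤ p.1 ∧ p.1 < s + 1/((n:ℝ)+1) ∧
      IsDensityMatrix p.2 ∧ ((1:ℂ) + (p.1:ℂ))⁻¹ • (ρ + (p.1:ℂ) • p.2) ∈ F := by
    intro n
    have hlt : Robustness F ρ < ENNReal.ofReal (s + 1/((n:ℝ)+1)) := by
      refine lt_of_le_of_lt hsR ?_
      have h1 : (0:ℝ) < s + 1/((n:ℝ)+1) := by positivity
      exact (ENNReal.ofReal_lt_ofReal_iff h1).mpr (by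
        have : (0:ℝ) < 1/((n:ℝ)+1) := by positivity
        linarith)
    rw [Robustness] at hlt
    rw [iInf_lt_iff] at hlt
    obtain ⟨s', hs'⟩ := hlt
    rw [iInf_lt_iff] at hs'
    obtain ⟨hmem, hlt'⟩ := hs'
    obtain ⟨hs'0, τ, hτ, hτF⟩ := hmem
    exact ⟨(s', τ), hs'0, (ENNReal.ofReal_lt_ofReal_iff_of_nonneg hs'0).mp hlt', hτ, hτF⟩
  choose q hq0 hqlt hqτ hqF using hseq
  set σn : ℕ → Matrix (Fin d) (Fin d) ℂ :=
    fun n => ((1:ℂ) + ((q n).1:ℂ))⁻¹ • (ρ + ((q n).1:ℂ) • (q n).2) with hσn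
  have hσnF : ∀ n, σn n ∈ F := fun n => hqF n
  -- Step 2: F is compact
  have hFK : F ⊆ Set.pi Set.univ (fun _ : Fin d =>
      Set.pi Set.univ (fun _ : Fin d => Metric.closedBall (0:ℂ) 1)) := by
    intro σ hσ i _ j _
    rw [Metric.mem_closedBall, dist_zero_right]
    exact density_entry_bound (hF σ hσ) i j
  have hKcomp : IsCompact (Set.pi Set.univ (fun _ : Fin d =>
      Set.pi Set.univ (fun _ : Fin d => Metric.closedBall (0:ℂ) 1))) :=
    isCompact_univ_pi fun _ => isCompact_univ_pi fun _ => isCompact_closedBall 0 1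
  have hFcomp : IsCompact F := hKcomp.of_isClosed_subset hFc hFK
  haveI : FirstCountableTopology (Matrix (Fin d) (Fin d) ℂ) :=
    inferInstanceAs (FirstCountableTopology (Fin d → Fin d → ℂ))
  obtain ⟨sl, hslF, φ, hφ, hconv⟩ := hFcomp.tendsto_subseq hσnF
  -- Step 3: the error sequence
  set c : ℕ → ℝ := fun n => max ((q n).1 - s) 0 with hcdef
  have hc0 : ∀ n, 0 ≤ c n := fun n => le_max_right _ _
  have hcle : ∀ n, c n ≤ 1/((n:ℝ)+1) := by
    intro n
    refine max_le (by have := hqlt n; linarith) (by positivity)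
  have hc : Filter.Tendsto c Filter.atTop (nhds 0) :=
    squeeze_zero hc0 hcle tendsto_one_div_add_atTop_nhds_zero_nat
  -- Step 4: each perturbed matrix is PSD
  have hMn : ∀ n, (((1:ℂ) + (s:ℂ)) • σn n - ρ + ((c n : ℝ):ℂ) • σn n).PosSemidef := by
    intro n
    have hne : ((1:ℂ) + ((q n).1:ℂ)) ≠ 0 := by
      have : (0:ℝ) < 1 + (q n).1 := by have := hq0 n; linarith
      intro hcon
      rw [show ((1:ℂ) + ((q n).1:ℂ)) = (((1 + (q n).1 : ℝ)):ℂ) by push_cast; ring] at hcon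
      exact (ne_of_gt this) (by exact_mod_cast hcon)
    have h1 : ((1:ℂ) + ((q n).1:ℂ)) • σn n = ρ + ((q n).1:ℂ) • (q n).2 := by
      rw [hσn, smul_smul, mul_inv_cancel₀ hne, one_smul]
    have hid : ((1:ℂ) + (s:ℂ)) • σn n - ρ + ((c n : ℝ):ℂ) • σn n
        = ((q n).1:ℂ) • (q n).2 + (((s + c n - (q n).1 : ℝ)):ℂ) • σn n := by
      have h2 : ((1:ℂ) + (s:ℂ)) • σn n + ((c n : ℝ):ℂ) • σn n
          = ((1:ℂ) + ((q n).1:ℂ)) • σn n + (((s + c n - (q n).1 : ℝ)):ℂ) • σn n := by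
        rw [← add_smul, ← add_smul]
        congr 1
        push_cast
        ring
      calc ((1:ℂ) + (s:ℂ)) • σn n - ρ + ((c n : ℝ):ℂ) • σn n
          = ((1:ℂ) + (s:ℂ)) • σn n + ((c n : ℝ):ℂ) • σn n - ρ := by abel
        _ = ((1:ℂ) + ((q n).1:ℂ)) • σn n + (((s + c n - (q n).1 : ℝ)):ℂ) • σn n - ρ := by
            rw [h2]
        _ = ρ + ((q n).1:ℂ) • (q n).2 + (((s + c n - (q n).1 : ℝ)):ℂ) • σn n - ρ := by
            rw [h1]
        _ = ((q n).1:ℂ) • (q n).2 + (((s + c n - (q n).1 : ℝ)):ℂ) • σn n := by abel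
    rw [hid]
    have hb : 0 ≤ s + c n - (q n).1 := by
      have := le_max_left ((q n).1 - s) 0
      rw [hcdef]
      simp only []
      linarith [this]
    have hden : IsDensityMatrix (σn n) := hF _ (hσnF n)
    exact ((posSemidef_real_smul (hqτ n).1 (hq0 n)).add
      (posSemidef_real_smul hden.1 hb))
  -- Step 5: pass to the limit
  have hslden : IsDensityMatrix sl := hF _ hslF
  set M : Matrix (Fin d) (Fin d) ℂ := ((1:ℂ) + (s:ℂ)) • sl - ρ with hMdef
  have hMlim : Filter.Tendsto
      (fun k => ((1:ℂ) + (s:ℂ)) • σn (φ k) - ρ + ((c (φ k) : ℝ):ℂ) • σn (φ k))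
      Filter.atTop (nhds M) := by
    have h1 : Filter.Tendsto (fun k => σn (φ k)) Filter.atTop (nhds sl) := hconv
    have h2 : Filter.Tendsto (fun k => ((c (φ k) : ℝ):ℂ)) Filter.atTop (nhds 0) := by
      have h3 : Filter.Tendsto (fun k => c (φ k)) Filter.atTop (nhds 0) :=
        hc.comp hφ.tendsto_atTop
      have := (Complex.continuous_ofReal.tendsto 0).comp h3
      exact this
    have h4 := ((h1.const_smul ((1:ℂ) + (s:ℂ))).sub
      (tendsto_const_nhds (x := ρ) (f := Filter.atTop (α := ℕ)))).add (h2.smul h1)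
    simpa using h4
  have hMpsd : M.PosSemidef := by
    refine Matrix.PosSemidef.of_dotProduct_mulVec_nonneg ?_ ?_
    · have hstar : star ((1:ℂ) + (s:ℂ)) = (1:ℂ) + (s:ℂ) := by simp [Complex.ext_iff]
      unfold Matrix.IsHermitian
      rw [hMdef, Matrix.conjTranspose_sub, Matrix.conjTranspose_smul, hstar,
        hslden.1.1, hρ.1.1]
    · intro x
      set g : Matrix (Fin d) (Fin d) ℂ → ℂ :=
        fun N => ∑ i, (starRingEnd ℂ) (x i) * ∑ j, N i j * x j with hgdef
      have hgcont : Continuous g := by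
        refine continuous_finset_sum _ fun i _ => Continuous.mul continuous_const ?_
        exact continuous_finset_sum _ fun j _ =>
          Continuous.mul ((continuous_apply j).comp (continuous_apply i)) continuous_const
      have hgeq : ∀ N : Matrix (Fin d) (Fin d) ℂ,
          dotProduct (star x) (N.mulVec x) = g N := by
        intro N
        simp [hgdef, dotProduct, Matrix.mulVec]
      have hT : Filter.Tendsto
          (fun k => g (((1:ℂ) + (s:ℂ)) • σn (φ k) - ρ + ((c (φ k) : ℝ):ℂ) • σn (φ k)))
          Filter.atTop (nhds (g M)) := (hgcont.tendsto M).comp hMlim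
      have hnn : ∀ k, 0 ≤ g (((1:ℂ) + (s:ℂ)) • σn (φ k) - ρ + ((c (φ k) : ℝ):ℂ) • σn (φ k)) := by
        intro k
        rw [← hgeq]
        exact (hMn (φ k)).dotProduct_mulVec_nonneg x
      rw [hgeq M]
      rw [Complex.nonneg_iff]
      refine ⟨ge_of_tendsto' ((Complex.continuous_re.tendsto _).comp hT)
        (fun k => (Complex.nonneg_iff.mp (hnn k)).1), ?_⟩
      have him : Filter.Tendsto
          (fun k => (g (((1:ℂ) + (s:ℂ)) • σn (φ k) - ρ + ((c (φ k) : ℝ):ℂ) • σn (φ k))).im)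
          Filter.atTop (nhds (g M).im) := (Complex.continuous_im.tendsto _).comp hT
      have him0 : Filter.Tendsto
          (fun k => (g (((1:ℂ) + (s:ℂ)) • σn (φ k) - ρ + ((c (φ k) : ℝ):ℂ) • σn (φ k))).im)
          Filter.atTop (nhds 0) := by
        have heq : (fun k => (g (((1:ℂ) + (s:ℂ)) • σn (φ k) - ρ
            + ((c (φ k) : ℝ):ℂ) • σn (φ k))).im) = fun _ => (0:ℝ) := by
          funext k
          exact ((Complex.nonneg_iff.mp (hnn k)).2).symm
        rw [heq]
        exact tendsto_const_nhds
      exact tendsto_nhds_unique him0 him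
  -- Step 6: conclude
  refine ⟨sl, hslF, fun m _ => ?_⟩
  rw [Sres]
  have hinv : ((s:ℂ))⁻¹ = (((s⁻¹ : ℝ)):ℂ) := by push_cast; ring
  have hps : ((s:ℂ)⁻¹ • (((1:ℂ) + (s:ℂ)) • sl - ρ)).PosSemidef := by
    rw [hinv]
    exact posSemidef_real_smul hMpsd (by positivity)
  exact Spoly_nonneg hps m
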